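/- Let n ≥ 1 and let A be a symmetric positive-definite n×n integer matrix, defining the quadratic form f(v) = vᵀAv, and suppose that f(v) ∈ ℋ for every nonzero v ∈ ℤⁿ. Then there exist a symmetric positive-definite (n+1)×(n+1) integer matrix G, a vector 𝔬 ∈ ℤⁿ⁺¹, and an injective ℤ-linear map ι : ℤⁿ → ℤⁿ⁺¹ such that: (i) 𝔬ᵀG𝔬 = 3; (ii) wᵀGw is even for every w ∈ ℤⁿ⁺¹ with 𝔬ᵀGw = 0; (iii) there is no w ∈ ℤⁿ⁺¹ with wᵀGw = 2; and (iv) f(v) = 3·(ι v)ᵀG(ι v) − (𝔬ᵀG(ι v))² for all v ∈ ℤⁿ. -/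

import Mathlib

open Matrix

private lemma biladd' {n : ℕ} {R : Type*} [CommRing R] [Fintype (Fin n)]
    (M : Matrix (Fin n) (Fin n) R) (v w : Fin n → R) :
    (v+w) ⬝ᵥ M.mulVec (v+w) = v ⬝ᵥ M.mulVec v + v ⬝ᵥ M.mulVec w + w ⬝ᵥ M.mulVec v + w ⬝ᵥ M.mulVec w := by
  simp [Matrix.mulVec_add, add_dotProduct, dotProduct_add]; ring

private lemma bilsub' {n : ℕ} {R : Type*} [CommRing R]
    (M : Matrix (Fin n) (Fin n) R) (v w : Fin n → R) :
    (v-w) ⬝ᵥ M.mulVec (v-w) = v ⬝ᵥ M.mulVec v - v ⬝ᵥ M.mulVec w - w ⬝ᵥ M.mulVec v + w ⬝ᵥ M.mulVec w := by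
  simp [Matrix.mulVec_sub, sub_dotProduct, dotProduct_sub]; ring

private lemma rank_one {n : ℕ} (M : Matrix (Fin n) (Fin n) (ZMod 3)) (hs : Mᵀ = M)
    (h : ∀ v, v ⬝ᵥ M.mulVec v = 0 ∨ v ⬝ᵥ M.mulVec v = 1) :
    ∃ c : Fin n → ZMod 3, ∀ i j, M i j = c i * c j := by
  have hsym : ∀ v w, v ⬝ᵥ M.mulVec w = w ⬝ᵥ M.mulVec v := fun v w => by
    rw [Matrix.dotProduct_mulVec, ← Matrix.vecMul_transpose, hs, dotProduct_comm]
  have hent : ∀ i j : Fin n, Pi.single i (1:ZMod 3) ⬝ᵥ M.mulVec (Pi.single j 1) = M i j := by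
    intro i j; simp [Matrix.mulVec_single, single_dotProduct]
  by_cases hex : ∃ v₀, v₀ ⬝ᵥ M.mulVec v₀ = 1
  · obtain ⟨v₀, hv₀⟩ := hex
    have key : ∀ a x : ZMod 3, (a = 0 ∨ a = 1) → (a + 2*x + 1 = 0 ∨ a + 2*x + 1 = 1) →
        (a - 2*x + 1 = 0 ∨ a - 2*x + 1 = 1) → x^2 = a := by decide
    have hb : ∀ v, (v ⬝ᵥ M.mulVec v₀)^2 = v ⬝ᵥ M.mulVec v := by
      intro v
      refine key _ _ (h v) ?_ ?_
      · have := h (v + v₀)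
        rw [biladd', hsym v₀ v, hv₀] at this
        convert this using 2 <;> ring
      · have := h (v - v₀)
        rw [bilsub', hsym v₀ v, hv₀] at this
        convert this using 2 <;> ring
    have hbw : ∀ v w, v ⬝ᵥ M.mulVec w = (v ⬝ᵥ M.mulVec v₀) * (w ⬝ᵥ M.mulVec v₀) := by
      intro v w
      have h1 := hb (v + w)
      rw [biladd', hsym w v] at h1
      rw [add_dotProduct] at h1
      have h2 := hb v; have h3 := hb w
      have hcan : ∀ x y : ZMod 3, 2*x = 2*y → x = y := by decide
      apply hcan
      have : (v ⬝ᵥ M.mulVec v₀ + w ⬝ᵥ M.mulVec v₀)^2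
          = v ⬝ᵥ M.mulVec v + v ⬝ᵥ M.mulVec w + v ⬝ᵥ M.mulVec w + w ⬝ᵥ M.mulVec w := h1
      rw [← h2, ← h3] at this
      linear_combination -this
    refine ⟨fun i => Pi.single i 1 ⬝ᵥ M.mulVec v₀, fun i j => ?_⟩
    rw [← hent i j, hbw (Pi.single i 1) (Pi.single j 1)]
  · push_neg at hex
    have hq : ∀ v, v ⬝ᵥ M.mulVec v = 0 := fun v => (h v).resolve_right (hex v)
    refine ⟨0, fun i j => ?_⟩
    have h1 := hq (Pi.single i 1 + Pi.single j 1)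
    rw [biladd', hq, hq, hsym (Pi.single j 1) (Pi.single i 1), hent] at h1
    have : ∀ x : ZMod 3, 0 + x + x + 0 = 0 → x = 0 := by decide
    simp [this _ h1]

private lemma find_c {n : ℕ} (A : Matrix (Fin n) (Fin n) ℤ) (hA : Aᵀ = A)
    (hH : ∀ v : Fin n → ℤ, v ≠ 0 →
      (v ⬝ᵥ A.mulVec v) % 6 = 0 ∨ (v ⬝ᵥ A.mulVec v) % 6 = 2) :
    ∃ c : Fin n → ℤ, ∀ i j, (3:ℤ) ∣ A i j + c i * c j := by
  set f := Int.castRingHom (ZMod 3) with hf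
  set M : Matrix (Fin n) (Fin n) (ZMod 3) := -(A.map f) with hM
  have hsymM : Mᵀ = M := by
    rw [hM, Matrix.transpose_neg, ← Matrix.transpose_map, hA]
  have hcomp : ∀ v : Fin n → ZMod 3, (⇑f ∘ fun i => ((v i).val : ℤ)) = v := by
    intro v; funext i
    simp [f, ZMod.natCast_val, ZMod.cast_id]
  have hc : ∀ v : Fin n → ZMod 3,
      (((fun i => ((v i).val : ℤ)) ⬝ᵥ A.mulVec (fun i => ((v i).val : ℤ)) : ℤ) : ZMod 3)
        = v ⬝ᵥ (A.map ⇑f).mulVec v := by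
    intro v
    have h1 : ((((fun i => ((v i).val : ℤ))) ⬝ᵥ A.mulVec (fun i => ((v i).val : ℤ)) : ℤ) : ZMod 3)
        = (⇑f ∘ fun i => ((v i).val : ℤ)) ⬝ᵥ (⇑f ∘ A.mulVec (fun i => ((v i).val : ℤ))) :=
      RingHom.map_dotProduct f _ _
    rw [h1, hcomp]
    congr 1
    funext i
    rw [Function.comp_apply, RingHom.map_mulVec, hcomp]
  have hval : ∀ v : Fin n → ZMod 3, v ⬝ᵥ M.mulVec v = 0 ∨ v ⬝ᵥ M.mulVec v = 1 := by
    intro v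
    have hMv : v ⬝ᵥ M.mulVec v = -(v ⬝ᵥ (A.map ⇑f).mulVec v) := by
      rw [hM, Matrix.neg_mulVec, dotProduct_neg]
    by_cases hv : (fun i => ((v i).val : ℤ)) = (0 : Fin n → ℤ)
    · have hv0 : v = 0 := by
        funext i
        have := congrFun hv i
        simp only [Pi.zero_apply, Int.natCast_eq_zero] at this
        simpa [ZMod.val_eq_zero] using this
      subst hv0; left; simp
    · rcases hH _ hv with h6 | h6
      · left
        rw [hMv, ← hc v]
        have : (3:ℤ) ∣ (fun i => ((v i).val : ℤ)) ⬝ᵥ A.mulVec (fun i => ((v i).val : ℤ)) := by omega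
        rw [(ZMod.intCast_zmod_eq_zero_iff_dvd _ 3).mpr this]
        simp
      · right
        rw [hMv, ← hc v]
        have : (3:ℤ) ∣ ((fun i => ((v i).val : ℤ)) ⬝ᵥ A.mulVec (fun i => ((v i).val : ℤ))) - 2 := by omega
        have h2 : (((fun i => ((v i).val : ℤ)) ⬝ᵥ A.mulVec (fun i => ((v i).val : ℤ)) : ℤ) : ZMod 3) = 2 := by
          have := (ZMod.intCast_zmod_eq_zero_iff_dvd _ 3).mpr this
          push_cast at this
          linear_combination this
        rw [h2]; decide
  obtain ⟨cb, hcb⟩ := rank_one M hsymM hval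
  refine ⟨fun i => ((cb i).val : ℤ), fun i j => ?_⟩
  have hcast : ((A i j + ((cb i).val : ℤ) * ((cb j).val : ℤ) : ℤ) : ZMod 3) = 0 := by
    push_cast
    have h1 : ((cb i).val : ZMod 3) = cb i := by simp [ZMod.natCast_val, ZMod.cast_id]
    have h2 : ((cb j).val : ZMod 3) = cb j := by simp [ZMod.natCast_val, ZMod.cast_id]
    rw [h1, h2, ← hcb i j, hM]
    simp [Matrix.map_apply, f]
  exact (ZMod.intCast_zmod_eq_zero_iff_dvd _ 3).mp hcast

private theorem main_thm
    (n : ℕ) (hn : 1 ≤ n) (A : Matrix (Fin n) (Fin n) ℤ) (hA : A.IsSymm)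
    (hApos : ∀ v : Fin n → ℤ, v ≠ 0 → 0 < v ⬝ᵥ A.mulVec v)
    (hH : ∀ v : Fin n → ℤ, v ≠ 0 →
      6 < v ⬝ᵥ A.mulVec v ∧
        ((v ⬝ᵥ A.mulVec v) % 6 = 0 ∨ (v ⬝ᵥ A.mulVec v) % 6 = 2))
    (c : Fin n → ℤ) (hc : ∀ i j, (3:ℤ) ∣ A i j + c i * c j) :
    ∃ (G : Matrix (Fin (n + 1)) (Fin (n + 1)) ℤ) (o : Fin (n + 1) → ℤ)
      (ι : (Fin n → ℤ) →ₗ[ℤ] (Fin (n + 1) → ℤ)),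
      Function.Injective ι ∧
      G.IsSymm ∧
      (∀ w : Fin (n + 1) → ℤ, w ≠ 0 → 0 < w ⬝ᵥ G.mulVec w) ∧
      o ⬝ᵥ G.mulVec o = 3 ∧
      (∀ w : Fin (n + 1) → ℤ, o ⬝ᵥ G.mulVec w = 0 → 2 ∣ w ⬝ᵥ G.mulVec w) ∧
      (¬ ∃ w : Fin (n + 1) → ℤ, w ⬝ᵥ G.mulVec w = 2) ∧
      (∀ v : Fin n → ℤ,
        v ⬝ᵥ A.mulVec v =
          3 * ((ι v) ⬝ᵥ G.mulVec (ι v)) - (o ⬝ᵥ G.mulVec (ι v)) ^ 2) := by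
  classical
  set B : Matrix (Fin n) (Fin n) ℤ := Matrix.of (fun i j => (A i j + c i * c j) / 3) with hBdef
  have hB : ∀ i j, 3 * B i j = A i j + c i * c j := by
    intro i j
    simpa [hBdef] using (Int.mul_ediv_cancel' (hc i j))
  set G : Matrix (Fin (n+1)) (Fin (n+1)) ℤ :=
    Matrix.of (vecCons (vecCons 3 c) (fun i => vecCons (c i) (B i))) with hGdef
  set o : Fin (n+1) → ℤ := vecCons 1 0 with hodef
  have hGmul : ∀ (t : ℤ) (u : Fin n → ℤ),
      G.mulVec (vecCons t u) = vecCons (3*t + c ⬝ᵥ u) (t • c + B.mulVec u) := by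
    intro t u
    funext i
    refine Fin.cases ?_ (fun i => ?_) i
    · show (vecCons 3 c) ⬝ᵥ vecCons t u = vecCons (3*t + c ⬝ᵥ u) (t • c + B.mulVec u) 0
      rw [Matrix.cons_dotProduct, Matrix.head_cons, Matrix.tail_cons, Matrix.cons_val_zero]
    · show (vecCons (c i) (B i)) ⬝ᵥ vecCons t u = vecCons (3*t + c ⬝ᵥ u) (t • c + B.mulVec u) i.succ
      rw [Matrix.cons_dotProduct, Matrix.head_cons, Matrix.tail_cons, Matrix.cons_val_succ]
      simp [Matrix.mulVec, mul_comm]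
  have hquad : ∀ (t : ℤ) (u : Fin n → ℤ),
      vecCons t u ⬝ᵥ G.mulVec (vecCons t u)
        = 3*t^2 + 2*t*(c ⬝ᵥ u) + u ⬝ᵥ B.mulVec u := by
    intro t u
    rw [hGmul, Matrix.cons_dotProduct, Matrix.head_cons, Matrix.tail_cons,
      dotProduct_add, dotProduct_smul, smul_eq_mul, dotProduct_comm u c]
    ring
  have hBu : ∀ u : Fin n → ℤ, 3 * (u ⬝ᵥ B.mulVec u) = u ⬝ᵥ A.mulVec u + (c ⬝ᵥ u)^2 := by
    intro u
    have h3B : (3:ℤ) • B = A + Matrix.vecMulVec c c := by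
      ext i j
      simp [Matrix.vecMulVec_apply, hB i j]
    have h1 : (Matrix.vecMulVec c c).mulVec u = (c ⬝ᵥ u) • c := by
      funext i
      simp [Matrix.vecMulVec_apply, Matrix.mulVec, dotProduct, Finset.mul_sum,
        Finset.sum_mul, mul_assoc, mul_comm, mul_left_comm]
    calc 3 * (u ⬝ᵥ B.mulVec u) = u ⬝ᵥ ((3:ℤ) • B).mulVec u := by
          rw [Matrix.smul_mulVec, dotProduct_smul, smul_eq_mul]
      _ = u ⬝ᵥ A.mulVec u + u ⬝ᵥ (Matrix.vecMulVec c c).mulVec u := by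
          rw [h3B, Matrix.add_mulVec, dotProduct_add]
      _ = u ⬝ᵥ A.mulVec u + (c ⬝ᵥ u)^2 := by
          rw [h1, dotProduct_smul, dotProduct_comm u c, smul_eq_mul]; ring
  have hoG : ∀ x : Fin (n+1) → ℤ, o ⬝ᵥ x = vecHead x := by
    intro x
    rw [hodef, Matrix.cons_dotProduct, zero_dotProduct]
    ring
  have hkey : ∀ (t : ℤ) (u : Fin n → ℤ),
      3 * (vecCons t u ⬝ᵥ G.mulVec (vecCons t u))
        = (3*t + c ⬝ᵥ u)^2 + u ⬝ᵥ A.mulVec u := by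
    intro t u
    rw [hquad]
    have := hBu u
    ring_nf
    ring_nf at this
    linarith
  have hoGw : ∀ (t : ℤ) (u : Fin n → ℤ),
      o ⬝ᵥ G.mulVec (vecCons t u) = 3*t + c ⬝ᵥ u := by
    intro t u
    rw [hoG, hGmul, Matrix.head_cons]
  -- general-w versions
  have hkey' : ∀ w : Fin (n+1) → ℤ,
      3 * (w ⬝ᵥ G.mulVec w)
        = (o ⬝ᵥ G.mulVec w)^2 + vecTail w ⬝ᵥ A.mulVec (vecTail w) := by
    intro w
    have h1 := hkey (vecHead w) (vecTail w)
    have h2 := hoGw (vecHead w) (vecTail w)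
    rw [Matrix.cons_head_tail] at h1 h2
    rw [h1, h2]
  -- the linear map
  let ι : (Fin n → ℤ) →ₗ[ℤ] (Fin (n+1) → ℤ) :=
    { toFun := fun v => vecCons 0 v
      map_add' := by
        intro u v; funext i
        refine Fin.cases ?_ (fun i => ?_) i <;> simp
      map_smul' := by
        intro m v; funext i
        refine Fin.cases ?_ (fun i => ?_) i <;> simp }
  refine ⟨G, o, ι, ?_, ?_, ?_, ?_, ?_, ?_, ?_⟩
  · intro u v h
    have := congrArg vecTail (h : vecCons 0 u = vecCons 0 v)
    simpa [ι, Matrix.tail_cons] using this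
  · -- symmetry
    show Gᵀ = G
    funext i j
    rw [Matrix.transpose_apply]
    refine Fin.cases ?_ (fun i' => ?_) i <;> refine Fin.cases ?_ (fun j' => ?_) j
    · rfl
    · show G j'.succ 0 = G 0 j'.succ
      simp [hGdef]
    · show G 0 i'.succ = G i'.succ 0
      simp [hGdef]
    · show G j'.succ i'.succ = G i'.succ j'.succ
      simp only [hGdef, Matrix.of_apply, Matrix.cons_val_succ]
      show B j' i' = B i' j'
      simp only [hBdef, Matrix.of_apply]
      rw [hA.apply]
      ring_nf
  · -- positive definite
    intro w hw
    have h1 := hkey' w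
    by_cases hu : vecTail w = 0
    · have hh : vecHead w ≠ 0 := by
        intro h0
        apply hw
        rw [← Matrix.cons_head_tail w, h0, hu]
        funext i
        refine Fin.cases ?_ (fun i => ?_) i <;> simp
      rw [hu] at h1
      simp only [Matrix.mulVec_zero, dotProduct_zero, add_zero] at h1
      have h2 := hoGw (vecHead w) (vecTail w)
      rw [Matrix.cons_head_tail] at h2
      rw [hu] at h2
      simp only [dotProduct_zero, add_zero] at h2
      rw [h2] at h1
      have h3 : 1 ≤ (vecHead w)^2 := by
        rcases hh.lt_or_gt with h | h <;> nlinarith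
      nlinarith [h1, h3]
    · have h2 := hApos _ hu
      nlinarith [sq_nonneg (o ⬝ᵥ G.mulVec w)]
  · -- o G o = 3
    have := hoGw 1 0
    simp only [dotProduct_zero, mul_one, add_zero] at this
    rw [← hodef] at this
    rw [this]
  · -- evenness
    intro w h0
    have h1 := hkey' w
    rw [h0] at h1
    norm_num at h1
    by_cases hu : vecTail w = 0
    · rw [hu] at h1
      simp only [Matrix.mulVec_zero, dotProduct_zero] at h1
      omega
    · rcases (hH _ hu).2 with h6 | h6 <;> omega
  · -- no roots
    rintro ⟨w, hw⟩
    have h1 := hkey' w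
    rw [hw] at h1
    by_cases hu : vecTail w = 0
    · have h2 := hoGw (vecHead w) (vecTail w)
      rw [Matrix.cons_head_tail] at h2
      rw [hu] at h1 h2
      simp only [Matrix.mulVec_zero, dotProduct_zero, add_zero] at h1 h2
      rw [h2] at h1
      rcases lt_trichotomy (vecHead w) 0 with h | h | h
      · nlinarith
      · rw [h] at h1; norm_num at h1
      · nlinarith
    · have h2 := (hH _ hu).1
      nlinarith [sq_nonneg (o ⬝ᵥ G.mulVec w)]
  · -- the formula
    intro v
    have h1 := hkey 0 v
    have h2 := hoGw 0 v
    show v ⬝ᵥ A.mulVec v = 3 * (vecCons 0 v ⬝ᵥ G.mulVec (vecCons 0 v)) - (o ⬝ᵥ G.mulVec (vecCons 0 v))^2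
    rw [h2]
    linarith

/-- if a positive-definite integer-matrix quadratic form in n ≥ 1
variables takes all its nonzero values in the Hassett set ℋ, then it arises as
`v ↦ 3⟨ιv,ιv⟩ − ⟨𝔬,ιv⟩²` for a positive-definite lattice of rank n+1 with a
distinguished element 𝔬 and no roots. -/
theorem exists_overlattice_with_distinguished_element
    (n : ℕ) (hn : 1 ≤ n) (A : Matrix (Fin n) (Fin n) ℤ) (hA : A.IsSymm)
    (hApos : ∀ v : Fin n → ℤ, v ≠ 0 → 0 < v ⬝ᵥ A.mulVec v)
    (hH : ∀ v : Fin n → ℤ, v ≠ 0 →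
      6 < v ⬝ᵥ A.mulVec v ∧
        ((v ⬝ᵥ A.mulVec v) % 6 = 0 ∨ (v ⬝ᵥ A.mulVec v) % 6 = 2)) :
    ∃ (G : Matrix (Fin (n + 1)) (Fin (n + 1)) ℤ) (o : Fin (n + 1) → ℤ)
      (ι : (Fin n → ℤ) →ₗ[ℤ] (Fin (n + 1) → ℤ)),
      Function.Injective ι ∧
      G.IsSymm ∧
      (∀ w : Fin (n + 1) → ℤ, w ≠ 0 → 0 < w ⬝ᵥ G.mulVec w) ∧
      o ⬝ᵥ G.mulVec o = 3 ∧
      (∀ w : Fin (n + 1) → ℤ, o ⬝ᵥ G.mulVec w = 0 → 2 ∣ w ⬝ᵥ G.mulVec w) ∧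
      (¬ ∃ w : Fin (n + 1) → ℤ, w ⬝ᵥ G.mulVec w = 2) ∧
      (∀ v : Fin n → ℤ,
        v ⬝ᵥ A.mulVec v =
          3 * ((ι v) ⬝ᵥ G.mulVec (ι v)) - (o ⬝ᵥ G.mulVec (ι v)) ^ 2) := by
  obtain ⟨c, hc⟩ := find_c A hA (fun v hv => (hH v hv).2)
  exact main_thm n hn A hA hApos hH c hc
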